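/- Let Y be any real-valued stochastic process on [0, s] with continuous sample paths such that Y_0 = 0 almost surely and, for each t ∈ (0, s], the law of Y_t is the centered Gaussian measure of variance t. Then E[exp(∫_0^s Y_t dt)] ≤ exp(2s³/9). -/

import Mathlib

open MeasureTheory Filter Set ProbabilityTheory

open scoped Interval ENNReal NNReal

lemma gauss_pdf_mul_exp (v : NNReal) (hv : (0:ℝ) < v) (a x : ℝ) :
    gaussianPDFReal 0 v x * Real.exp (a * x)
      = Real.exp (a ^ 2 * v / 2) * gaussianPDFReal (a * v) v x := by
  have hv' : (v:ℝ) ≠ 0 := hv.ne'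
  have h : -(x-0)^2/(2*(v:ℝ)) + a*x = a^2*(v:ℝ)/2 + -(x - a*(v:ℝ))^2/(2*(v:ℝ)) := by
    field_simp
    ring
  simp only [gaussianPDFReal]
  rw [mul_assoc, ← Real.exp_add, h, Real.exp_add]
  ring

lemma gauss_exp_lintegral (v : NNReal) (hv : v ≠ 0) (a : ℝ) :
    ∫⁻ x, ENNReal.ofReal (Real.exp (a * x)) ∂(gaussianReal 0 v)
      = ENNReal.ofReal (Real.exp (a ^ 2 * v / 2)) := by
  have hv' : (0:ℝ) < v := by positivity
  rw [gaussianReal_of_var_ne_zero 0 hv,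
    lintegral_withDensity_eq_lintegral_mul volume (measurable_gaussianPDF 0 v)
      ((by fun_prop : Measurable fun x : ℝ => ENNReal.ofReal (Real.exp (a*x))))]
  have hpt : ∀ x : ℝ, (gaussianPDF 0 v * fun x => ENNReal.ofReal (Real.exp (a * x))) x
      = ENNReal.ofReal (Real.exp (a ^ 2 * v / 2))
        * ENNReal.ofReal (gaussianPDFReal (a * v) v x) := by
    intro x
    simp only [Pi.mul_apply, gaussianPDF]
    rw [← ENNReal.ofReal_mul (gaussianPDFReal_nonneg 0 v x),
      ← ENNReal.ofReal_mul (Real.exp_nonneg _)]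
    exact congrArg _ (gauss_pdf_mul_exp v hv' a x)
  simp_rw [hpt]
  rw [lintegral_const_mul _ (measurable_gaussianPDFReal (a*v) v).ennreal_ofReal]
  have := lintegral_gaussianPDFReal_eq_one (a*v) hv
  rw [this, mul_one]

/-- The rearrangement upper bound applied to the Brownian single-time marginals
(extended, as in the Remark of Section 4.2, to allow the Dirac marginal at `t = 0`):
if `Y` is a real-valued process on `[0, s]` with continuous sample paths, `Y_0 = 0`
almost surely, and `law(Y_t) = N(0, t)` for each `t ∈ (0, s]`, then
`E[exp(∫₀ˢ Y_t dt)] ≤ exp(2s³/9)`. -/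
theorem statement16
    {Ω : Type*} [MeasurableSpace Ω] (P : Measure Ω) [IsProbabilityMeasure P]
    (s : ℝ) (hs : 0 < s)
    (Y : ℝ → Ω → ℝ)
    (hY0 : ∀ᵐ ω ∂P, Y 0 ω = 0)
    (hYcont : ∀ ω, ContinuousOn (fun t => Y t ω) (Icc (0:ℝ) s))
    (hYmeas : ∀ t ∈ Icc (0:ℝ) s, Measurable (Y t))
    (hYlaw : ∀ t ∈ Ioc (0:ℝ) s, Measure.map (Y t) P = gaussianReal 0 t.toNNReal) :
    ∫ ω, Real.exp (∫ t in (0:ℝ)..s, Y t ω) ∂P ≤ Real.exp (2 * s ^ 3 / 9) := by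
  classical
  set φ : ℝ → ℝ := fun u => s * u ^ ((2:ℝ)/3) with hφdef
  set ψ : ℝ → ℝ := fun u => (2 * s / 3) * (u ^ ((1:ℝ)/3))⁻¹ with hψdef
  set clamp : ℝ → ℝ := fun x => max 0 (min x s) with hclampdef
  set V : ℝ → Ω → ℝ := fun u ω => Y (clamp (φ u)) ω with hVdef
  set μ₀ : Measure ℝ := volume.restrict (Ioc (0:ℝ) 1) with hμ₀def
  haveI : IsProbabilityMeasure μ₀ := ⟨by simp [hμ₀def, Real.volume_Ioc]⟩
  -- basic facts
  have hφcont : Continuous φ := continuous_const.mul (Real.continuous_rpow_const (by norm_num))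
  have hclampcont : Continuous clamp :=
    continuous_const.max (continuous_id.min continuous_const)
  have hclampmem : ∀ x, clamp x ∈ Icc (0:ℝ) s :=
    fun x => ⟨le_max_left _ _, max_le hs.le (min_le_right _ _)⟩
  have hclampeq : ∀ x ∈ Icc (0:ℝ) s, clamp x = x := by
    intro x hx
    simp only [hclampdef]
    rw [min_eq_left hx.2, max_eq_right hx.1]
  have hφmem : ∀ u ∈ Icc (0:ℝ) 1, φ u ∈ Icc 0 s := by
    intro u hu
    constructor
    · exact mul_nonneg hs.le (Real.rpow_nonneg hu.1 _)
    · calc s * u ^ ((2:ℝ)/3) ≤ s * 1 := by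
            exact mul_le_mul_of_nonneg_left (Real.rpow_le_one hu.1 hu.2 (by norm_num)) hs.le
        _ = s := mul_one s
  have hφIoc : ∀ u ∈ Ioc (0:ℝ) 1, φ u ∈ Ioc 0 s := by
    intro u hu
    exact ⟨mul_pos hs (Real.rpow_pos_of_pos hu.1 _),
      (hφmem u ⟨hu.1.le, hu.2⟩).2⟩
  have hVcont : ∀ ω, Continuous fun u => V u ω := fun ω =>
    (hYcont ω).comp_continuous (hclampcont.comp hφcont) (fun u => hclampmem _)
  have hVmeas : ∀ u, Measurable (V u) := fun u => hYmeas _ (hclampmem _)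
  have hVunc : Measurable (Function.uncurry V) :=
    measurable_uncurry_of_continuous_of_measurable hVcont hVmeas
  have hψmeas : Measurable ψ :=
    ((Real.continuous_rpow_const (by norm_num)).measurable.inv).const_mul _
  have hψnonneg : ∀ u ∈ Ioc (0:ℝ) 1, 0 ≤ ψ u := by
    intro u hu
    have : (0:ℝ) < u ^ ((1:ℝ)/3) := Real.rpow_pos_of_pos hu.1 _
    positivity
  -- ψ is integrable on (0,1]
  have hψint : Integrable ψ μ₀ := by
    have h1 : IntegrableOn (fun u : ℝ => u ^ (-(1:ℝ)/3)) (Ioc (0:ℝ) 1) volume := by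
      have := intervalIntegral.intervalIntegrable_rpow' (a := (0:ℝ)) (b := 1)
        (r := -(1:ℝ)/3) (by norm_num)
      rwa [intervalIntegrable_iff_integrableOn_Ioc_of_le zero_le_one] at this
    have h2 : IntegrableOn (fun u : ℝ => (u ^ ((1:ℝ)/3))⁻¹) (Ioc (0:ℝ) 1) volume := by
      refine h1.congr_fun (fun u hu => ?_) measurableSet_Ioc
      rw [show -(1:ℝ)/3 = -((1:ℝ)/3) by norm_num]
      exact Real.rpow_neg hu.1.le _
    exact h2.const_mul _
  -- pathwise bound
  have hbound : ∀ ω, ∃ C : ℝ, ∀ u : ℝ, |V u ω| ≤ C := by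
    intro ω
    obtain ⟨C, hC⟩ := (isCompact_Icc : IsCompact (Icc (0:ℝ) s)).exists_bound_of_continuousOn
      (hYcont ω)
    exact ⟨C, fun u => hC _ (hclampmem _)⟩
  -- integrability of the Jensen integrand
  have hfi0 : ∀ ω, Integrable (fun u => ψ u * V u ω) μ₀ := by
    intro ω
    obtain ⟨C, hC⟩ := hbound ω
    refine Integrable.mono' (hψint.const_mul C) ?_ ?_
    · exact (hψmeas.mul (hVcont ω).measurable).aestronglyMeasurable
    · refine (ae_restrict_iff' measurableSet_Ioc).2 (ae_of_all _ fun u hu => ?_)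
      rw [Real.norm_eq_abs, abs_mul, abs_of_nonneg (hψnonneg u hu)]
      calc ψ u * |V u ω| ≤ ψ u * C := mul_le_mul_of_nonneg_left (hC u) (hψnonneg u hu)
        _ = C * ψ u := mul_comm _ _
  -- substitution
  have hsub : ∀ ω, ∫ t in (0:ℝ)..s, Y t ω = ∫ u in Ioc (0:ℝ) 1, ψ u * V u ω := by
    intro ω
    obtain ⟨C, hC⟩ := hbound ω
    have huIcc : [[(0:ℝ), 1]] = Icc (0:ℝ) 1 := uIcc_of_le zero_le_one
    have hff' : ∀ x ∈ Ioo (min (0:ℝ) 1) (max (0:ℝ) 1),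
        HasDerivWithinAt φ (ψ x) (Ioi x) x := by
      intro x hx
      rw [min_eq_left zero_le_one, max_eq_right zero_le_one] at hx
      have h0 := (Real.hasDerivAt_rpow_const (p := (2:ℝ)/3) (Or.inl hx.1.ne')).const_mul s
      have heq : s * ((2:ℝ)/3 * x ^ ((2:ℝ)/3 - 1)) = ψ x := by
        rw [show (2:ℝ)/3 - 1 = -((1:ℝ)/3) by norm_num, Real.rpow_neg hx.1.le]
        simp only [hψdef]
        ring
      rw [heq] at h0
      exact h0.hasDerivWithinAt
    have himg : φ '' [[(0:ℝ), 1]] ⊆ Icc 0 s := by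
      rw [huIcc]
      rintro y ⟨u, hu, rfl⟩
      exact hφmem u hu
    have hgcont : ContinuousOn (fun t => Y t ω)
        (φ '' Ioo (min (0:ℝ) 1) (max (0:ℝ) 1)) := by
      refine (hYcont ω).mono ?_
      refine Subset.trans (image_mono ?_) himg
      rw [min_eq_left zero_le_one, max_eq_right zero_le_one, huIcc]
      exact Ioo_subset_Icc_self
    have hg1 : IntegrableOn (fun t => Y t ω) (φ '' [[(0:ℝ), 1]]) volume :=
      ((hYcont ω).integrableOn_Icc).mono_set himg
    have hg2 : IntegrableOn (fun x => ψ x • (fun t => Y t ω) (φ x)) [[(0:ℝ), 1]] volume := by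
      rw [huIcc, integrableOn_Icc_iff_integrableOn_Ioc]
      refine IntegrableOn.congr_fun (hfi0 ω) (fun u hu => ?_) measurableSet_Ioc
      have hcl : clamp (φ u) = φ u := hclampeq _ (hφmem u ⟨hu.1.le, hu.2⟩)
      simp only [smul_eq_mul, hVdef, hcl]
    have key := intervalIntegral.integral_comp_smul_deriv''' (a := (0:ℝ)) (b := 1)
      hφcont.continuousOn hff' hgcont hg1 hg2
    have hφ0 : φ 0 = 0 := by
      simp only [hφdef]
      rw [Real.zero_rpow (by norm_num : ((2:ℝ)/3) ≠ 0), mul_zero]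
    have hφ1 : φ 1 = s := by
      simp only [hφdef]
      rw [Real.one_rpow, mul_one]
    rw [hφ0, hφ1] at key
    rw [← key, intervalIntegral.integral_of_le zero_le_one]
    refine setIntegral_congr_fun measurableSet_Ioc (fun u hu => ?_)
    have : clamp (φ u) = φ u := hclampeq _ (hφmem u ⟨hu.1.le, hu.2⟩)
    simp only [smul_eq_mul, hVdef, this, Function.comp_apply]
    -- joint measurability
  have hcore : Measurable (fun p : Ω × ℝ => ψ p.2 * V p.2 p.1) :=
    (hψmeas.comp measurable_snd).mul (hVunc.comp (measurable_snd.prodMk measurable_fst))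
  set G : Ω → ℝ := fun ω => ∫ u in Ioc (0:ℝ) 1, ψ u * V u ω with hGdef
  have hGmeas : StronglyMeasurable G :=
    (hcore.stronglyMeasurable).integral_prod_right' (ν := μ₀)
  set T : Ω → ℝ≥0∞ :=
    fun ω => ∫⁻ u in Ioc (0:ℝ) 1, ENNReal.ofReal (Real.exp (ψ u * V u ω)) with hTdef
  have hK : Measurable (Function.uncurry
      fun (ω : Ω) (u : ℝ) => ENNReal.ofReal (Real.exp (ψ u * V u ω))) :=
    (Real.measurable_exp.comp hcore).ennreal_ofReal
  have hswap : ∫⁻ ω, T ω ∂P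
      = ∫⁻ u in Ioc (0:ℝ) 1, ∫⁻ ω, ENNReal.ofReal (Real.exp (ψ u * V u ω)) ∂P :=
    lintegral_lintegral_swap (μ := P) (ν := μ₀) hK.aemeasurable
  have hu_int : ∀ u ∈ Ioc (0:ℝ) 1,
      ∫⁻ ω, ENNReal.ofReal (Real.exp (ψ u * V u ω)) ∂P
        = ENNReal.ofReal (Real.exp (2 * s ^ 3 / 9)) := by
    intro u hu
    have ht := hφIoc u hu
    have hcl : clamp (φ u) = φ u := hclampeq _ ⟨ht.1.le, ht.2⟩
    have hmeasYt : Measurable (Y (φ u)) := hYmeas _ ⟨ht.1.le, ht.2⟩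
    have hfm : Measurable fun x : ℝ => ENNReal.ofReal (Real.exp (ψ u * x)) := by fun_prop
    have hstep : ∫⁻ ω, ENNReal.ofReal (Real.exp (ψ u * V u ω)) ∂P
        = ∫⁻ x, ENNReal.ofReal (Real.exp (ψ u * x)) ∂(gaussianReal 0 (φ u).toNNReal) := by
      rw [← hYlaw (φ u) ht, lintegral_map hfm hmeasYt]
      simp only [hVdef, hcl]
    have hvne : (φ u).toNNReal ≠ 0 := by
      rw [Ne, Real.toNNReal_eq_zero]
      exact not_le.mpr ht.1
    rw [hstep, gauss_exp_lintegral _ hvne (ψ u)]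
    have hco : (((φ u).toNNReal : ℝ)) = φ u := Real.coe_toNNReal _ ht.1.le
    have hx : u ^ ((1:ℝ)/3) ≠ 0 := (Real.rpow_pos_of_pos hu.1 _).ne'
    have h13 : u ^ ((1:ℝ)/3) * u ^ ((1:ℝ)/3) = u ^ ((2:ℝ)/3) := by
      rw [← Real.rpow_add hu.1]
      norm_num
    have hkey : ψ u ^ 2 * φ u / 2 = 2 * s ^ 3 / 9 := by
      simp only [hψdef, hφdef]
      rw [← h13]
      field_simp
      ring
    rw [hco, hkey]
  have hT : ∫⁻ ω, T ω ∂P = ENNReal.ofReal (Real.exp (2 * s ^ 3 / 9)) := by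
    rw [hswap, setLIntegral_congr_fun measurableSet_Ioc hu_int]
    simp [Real.volume_Ioc]
  have hTmeas : Measurable T := hK.lintegral_prod_right' (ν := μ₀)
  have hTfin : ∀ᵐ ω ∂P, T ω < ⊤ :=
    ae_lt_top hTmeas (by rw [hT]; exact ENNReal.ofReal_ne_top)
  have hae : ∀ᵐ ω ∂P, ENNReal.ofReal (Real.exp (G ω)) ≤ T ω := by
    filter_upwards [hTfin] with ω hTω
    have hmexp : AEStronglyMeasurable (fun u => Real.exp (ψ u * V u ω)) μ₀ :=
      (Real.measurable_exp.comp (hψmeas.mul (hVcont ω).measurable)).aestronglyMeasurable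
    have hint_exp : Integrable (fun u => Real.exp (ψ u * V u ω)) μ₀ :=
      ⟨hmexp, (hasFiniteIntegral_iff_ofReal
        (ae_of_all _ fun u => Real.exp_nonneg _)).2 hTω⟩
    have hjen : Real.exp (∫ u, ψ u * V u ω ∂μ₀) ≤ ∫ u, Real.exp (ψ u * V u ω) ∂μ₀ :=
      convexOn_exp.map_integral_le (Real.continuous_exp.continuousOn) isClosed_univ
        (ae_of_all _ fun _ => mem_univ _) (hfi0 ω) hint_exp
    calc ENNReal.ofReal (Real.exp (G ω))
        ≤ ENNReal.ofReal (∫ u, Real.exp (ψ u * V u ω) ∂μ₀) := ENNReal.ofReal_le_ofReal hjen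
      _ = T ω := ofReal_integral_eq_lintegral_ofReal hint_exp
          (ae_of_all _ fun u => Real.exp_nonneg _)
  have hle : ∫⁻ ω, ENNReal.ofReal (Real.exp (G ω)) ∂P
      ≤ ENNReal.ofReal (Real.exp (2 * s ^ 3 / 9)) :=
    (lintegral_mono_ae hae).trans (le_of_eq hT)
  have hIeq : ∫ ω, Real.exp (∫ t in (0:ℝ)..s, Y t ω) ∂P = ∫ ω, Real.exp (G ω) ∂P :=
    integral_congr_ae (ae_of_all _ fun ω => congrArg Real.exp (hsub ω))
  rw [hIeq, integral_eq_lintegral_of_nonneg_ae (ae_of_all _ fun ω => Real.exp_nonneg _)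
    (Real.continuous_exp.comp_stronglyMeasurable hGmeas).aestronglyMeasurable]
  exact ENNReal.toReal_le_of_le_ofReal (Real.exp_nonneg _) hle
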